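/- Let H(nx) be the first hitting time of nx ∈ Z^2 by the simple symmetric random walk on Z^2 and let λ > 0. Suppose that for some finite γ_0 > 0 the quantity A = inf_{γ>0}(λγ + γ I(x/γ)) is attained at γ_0, where I is the Cramér function of the walk. Then for any ν > (γ_0/λ)(λ + I(x/γ_0)), limsup_{n→∞} (1/n) log E[e^{−λH(nx)}; H(nx) > νn] < −A; consequently E[e^{−λH(nx)}; H(nx) > νn] / E[e^{−λH(nx)}] → 0 as n → ∞, provided liminf_n (1/n) log E[e^{−λH(nx)}] ≥ −A. -/

import Mathlib

open Filter
open scoped ENNReal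

/-- `srwProb n x` is the probability that the simple symmetric random walk on ℤ²,
started at the origin, is at `x` at time `n`. -/
noncomputable def srwProb : ℕ → ℤ × ℤ → ℝ
  | 0, x => if x = 0 then 1 else 0
  | n + 1, x =>
      (srwProb n (x + (1, 0)) + srwProb n (x - (1, 0)) +
        srwProb n (x + (0, 1)) + srwProb n (x - (0, 1))) / 4

/-- `srwFirstHit x n = P(H(x) = n)`, the first-passage probability, characterized by
the renewal identity `srwProb n x = ∑_{k ≤ n} srwFirstHit x k * srwProb (n-k) 0`. -/
noncomputable def srwFirstHit (x : ℤ × ℤ) : ℕ → ℝ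
  | n => srwProb n x -
      ∑ k ∈ (Finset.range n).attach, srwFirstHit x k.1 * srwProb (n - k.1) (0, 0)
  decreasing_by exact Finset.mem_range.mp k.2

/-- `E[e^{-λ H(z)}]` (with `e^{-λ∞} = 0`). -/
noncomputable def hitLaplace (lam : ℝ) (z : ℤ × ℤ) : ℝ :=
  ∑' k : ℕ, Real.exp (-lam * k) * srwFirstHit z k

/-- `E[e^{-λ H(z)}; H(z) > ν n]`. -/
noncomputable def hitLaplaceTail (lam ν : ℝ) (n : ℕ) (z : ℤ × ℤ) : ℝ :=
  ∑' k : ℕ, if ν * n < (k : ℝ) then Real.exp (-lam * k) * srwFirstHit z k else 0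

/-- The log-Laplace transform of a step of the simple random walk on ℤ². -/
noncomputable def lmgf (y : ℝ × ℝ) : ℝ := Real.log ((Real.cosh y.1 + Real.cosh y.2) / 2)

/-- The Cramér rate function (Legendre transform of `lmgf`), valued in `[0,∞]`. -/
noncomputable def cramerI (z : ℝ × ℝ) : ℝ≥0∞ :=
  ⨆ y : ℝ × ℝ, ENNReal.ofReal (z.1 * y.1 + z.2 * y.2 - lmgf y)

namespace SRWAux

lemma srwProb_nonneg : ∀ (n : ℕ) (y : ℤ × ℤ), 0 ≤ srwProb n y
  | 0, y => by unfold srwProb; positivity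
  | n + 1, y => by
    have h1 := srwProb_nonneg n (y + (1,0))
    have h2 := srwProb_nonneg n (y - (1,0))
    have h3 := srwProb_nonneg n (y + (0,1))
    have h4 := srwProb_nonneg n (y - (0,1))
    unfold srwProb; linarith

lemma srwProb_le_one : ∀ (n : ℕ) (y : ℤ × ℤ), srwProb n y ≤ 1
  | 0, y => by unfold srwProb; split <;> norm_num
  | n + 1, y => by
    have h1 := srwProb_le_one n (y + (1,0))
    have h2 := srwProb_le_one n (y - (1,0))
    have h3 := srwProb_le_one n (y + (0,1))
    have h4 := srwProb_le_one n (y - (0,1))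
    unfold srwProb; linarith

/-- walk killed at `z` -/
noncomputable def q (z : ℤ × ℤ) : ℕ → ℤ × ℤ → ℝ
  | 0, y => if y = 0 then 1 else 0
  | n + 1, y => if y = z then 0 else
      (q z n (y + (1, 0)) + q z n (y - (1, 0)) +
        q z n (y + (0, 1)) + q z n (y - (0, 1))) / 4

lemma q_nonneg (z : ℤ × ℤ) : ∀ (n : ℕ) (y : ℤ × ℤ), 0 ≤ q z n y
  | 0, y => by unfold q; positivity
  | n + 1, y => by
    have h1 := q_nonneg z n (y + (1,0))
    have h2 := q_nonneg z n (y - (1,0))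
    have h3 := q_nonneg z n (y + (0,1))
    have h4 := q_nonneg z n (y - (0,1))
    unfold q; split <;> [exact le_refl 0; linarith]

lemma q_le_one (z : ℤ × ℤ) : ∀ (n : ℕ) (y : ℤ × ℤ), q z n y ≤ 1
  | 0, y => by unfold q; split <;> norm_num
  | n + 1, y => by
    have h1 := q_le_one z n (y + (1,0))
    have h2 := q_le_one z n (y - (1,0))
    have h3 := q_le_one z n (y + (0,1))
    have h4 := q_le_one z n (y - (0,1))
    unfold q; split <;> [norm_num; linarith]

lemma q_self {z : ℤ × ℤ} (hz : z ≠ 0) (n : ℕ) : q z n z = 0 := by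
  cases n with
  | zero => unfold q; simp [hz]
  | succ n => unfold q; simp

/-- first hitting time distribution -/
noncomputable def fh (z : ℤ × ℤ) : ℕ → ℝ
  | 0 => 0
  | n + 1 =>
      (q z n (z + (1, 0)) + q z n (z - (1, 0)) +
        q z n (z + (0, 1)) + q z n (z - (0, 1))) / 4

lemma fh_nonneg (z : ℤ × ℤ) (n : ℕ) : 0 ≤ fh z n := by
  cases n with
  | zero => simp [fh]
  | succ n =>
    have h1 := q_nonneg z n (z + (1,0))
    have h2 := q_nonneg z n (z - (1,0))
    have h3 := q_nonneg z n (z + (0,1))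
    have h4 := q_nonneg z n (z - (0,1))
    unfold fh; linarith

lemma fh_le_one (z : ℤ × ℤ) (n : ℕ) : fh z n ≤ 1 := by
  cases n with
  | zero => simp [fh]
  | succ n =>
    have h1 := q_le_one z n (z + (1,0))
    have h2 := q_le_one z n (z - (1,0))
    have h3 := q_le_one z n (z + (0,1))
    have h4 := q_le_one z n (z - (0,1))
    unfold fh; linarith

end SRWAux

namespace SRWAux

lemma srwProb_succ (n : ℕ) (y : ℤ × ℤ) : srwProb (n+1) y =
    (srwProb n (y + (1, 0)) + srwProb n (y - (1, 0)) +
      srwProb n (y + (0, 1)) + srwProb n (y - (0, 1))) / 4 := rfl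

lemma srwProb_zero (y : ℤ × ℤ) : srwProb 0 y = if y = 0 then 1 else 0 := rfl

lemma q_succ (z : ℤ × ℤ) (n : ℕ) (y : ℤ × ℤ) : q z (n+1) y = if y = z then 0 else
    (q z n (y + (1, 0)) + q z n (y - (1, 0)) +
      q z n (y + (0, 1)) + q z n (y - (0, 1))) / 4 := rfl

lemma fh_succ (z : ℤ × ℤ) (n : ℕ) : fh z (n+1) =
    (q z n (z + (1, 0)) + q z n (z - (1, 0)) +
      q z n (z + (0, 1)) + q z n (z - (0, 1))) / 4 := rfl

lemma renewal (z : ℤ × ℤ) : ∀ (n : ℕ) (y : ℤ × ℤ),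
    srwProb n y = q z n y + ∑ k ∈ Finset.range (n+1), fh z k * srwProb (n - k) (y - z)
  | 0, y => by simp [srwProb_zero, q, fh]
  | n + 1, y => by
    have IH := renewal z n
    have hterm : ∀ k ∈ Finset.range (n+1), fh z k * srwProb (n+1-k) (y - z)
        = fh z k * srwProb (n-k) ((y + (1,0)) - z) / 4 + fh z k * srwProb (n-k) ((y - (1,0)) - z) / 4
          + fh z k * srwProb (n-k) ((y + (0,1)) - z) / 4 + fh z k * srwProb (n-k) ((y - (0,1)) - z) / 4 := by
      intro k hk
      have hk' : k ≤ n := Nat.lt_succ_iff.mp (Finset.mem_range.mp hk)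
      have : n + 1 - k = (n - k) + 1 := by omega
      rw [this, srwProb_succ]
      have a1 : (y + (1,0)) - z = (y - z) + (1,0) := by ring
      have a2 : (y - (1,0)) - z = (y - z) - (1,0) := by ring
      have a3 : (y + (0,1)) - z = (y - z) + (0,1) := by ring
      have a4 : (y - (0,1)) - z = (y - z) - (0,1) := by ring
      rw [a1, a2, a3, a4]; ring
    rw [srwProb_succ,
      Finset.sum_range_succ (f := fun k => fh z k * srwProb (n+1-k) (y - z)),
      Finset.sum_congr rfl hterm,
      IH (y + (1,0)), IH (y - (1,0)), IH (y + (0,1)), IH (y - (0,1)), q_succ]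
    by_cases hy : y = z
    · subst hy
      have h0 : srwProb (n+1-(n+1)) (y - y) = 1 := by simp [srwProb_zero]
      rw [if_pos rfl, fh_succ, h0]
      rw [Finset.sum_add_distrib, Finset.sum_add_distrib, Finset.sum_add_distrib,
        ← Finset.sum_div, ← Finset.sum_div, ← Finset.sum_div, ← Finset.sum_div]
      ring
    · have h0 : srwProb (n+1-(n+1)) (y - z) = 0 := by
        simp [srwProb_zero, sub_eq_zero, hy]
      rw [if_neg hy, h0, Finset.sum_add_distrib, Finset.sum_add_distrib,
        Finset.sum_add_distrib, ← Finset.sum_div, ← Finset.sum_div, ← Finset.sum_div,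
        ← Finset.sum_div]
      ring

end SRWAux

namespace SRWAux

lemma srwFirstHit_eq_fh {z : ℤ × ℤ} (hz : z ≠ 0) : ∀ n, srwFirstHit z n = fh z n := by
  intro n
  induction n using Nat.strong_induction_on with
  | _ n IH =>
    rw [srwFirstHit]
    have hsum : ∑ k ∈ (Finset.range n).attach, srwFirstHit z k.1 * srwProb (n - k.1) (0, 0)
        = ∑ k ∈ Finset.range n, fh z k * srwProb (n - k) (0, 0) := by
      rw [← Finset.sum_attach (Finset.range n) (fun k => fh z k * srwProb (n - k) (0, 0))]
      exact Finset.sum_congr rfl fun k _ => by rw [IH k.1 (Finset.mem_range.mp k.2)]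
    rw [hsum]
    have hren := renewal z n z
    rw [q_self hz, Finset.sum_range_succ, sub_self] at hren
    have h00 : srwProb (n - n) ((0 : ℤ × ℤ)) = 1 := by
      simp [Nat.sub_self, srwProb_zero]
    rw [h00, mul_one, zero_add] at hren
    have h0' : ((0, 0) : ℤ × ℤ) = (0 : ℤ × ℤ) := rfl
    rw [h0']
    linarith

lemma q_step_ge (z : ℤ × ℤ) (m : ℕ) (y y' : ℤ × ℤ) (hy' : y' ≠ z)
    (h : y = y' + (1,0) ∨ y = y' - (1,0) ∨ y = y' + (0,1) ∨ y = y' - (0,1)) :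
    q z m y / 4 ≤ q z (m+1) y' := by
  rw [q_succ, if_neg hy']
  have n1 := q_nonneg z m (y' + (1,0))
  have n2 := q_nonneg z m (y' - (1,0))
  have n3 := q_nonneg z m (y' + (0,1))
  have n4 := q_nonneg z m (y' - (0,1))
  rcases h with h|h|h|h <;> subst h <;> linarith

lemma fh_step_ge (z : ℤ × ℤ) (m : ℕ) (y : ℤ × ℤ)
    (h : y = z + (1,0) ∨ y = z - (1,0) ∨ y = z + (0,1) ∨ y = z - (0,1)) :
    q z m y / 4 ≤ fh z (m+1) := by
  rw [fh_succ]
  have n1 := q_nonneg z m (z + (1,0))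
  have n2 := q_nonneg z m (z - (1,0))
  have n3 := q_nonneg z m (z + (0,1))
  have n4 := q_nonneg z m (z - (0,1))
  rcases h with h|h|h|h <;> subst h <;> linarith

lemma q_zero_ge {z : ℤ × ℤ} (hz : z ≠ 0) : ∀ m : ℕ, ((1:ℝ)/16)^m ≤ q z (2*m) 0 := by
  have h0z : (0 : ℤ × ℤ) ≠ z := fun h => hz h.symm
  obtain ⟨w, hwz, hw⟩ : ∃ w : ℤ × ℤ, w ≠ z ∧ (w = (1,0) ∨ w = (0,1)) := by
    by_cases h1 : z = (1,0)
    · exact ⟨(0,1), by simp [h1], Or.inr rfl⟩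
    · exact ⟨(1,0), fun h => h1 h.symm, Or.inl rfl⟩
  intro m
  induction m with
  | zero => simp [q]
  | succ m IH =>
    have s1 : q z (2*m) 0 / 4 ≤ q z (2*m+1) w := by
      apply q_step_ge z (2*m) 0 w hwz
      rcases hw with h|h <;> subst h
      · right; left; decide
      · right; right; right; decide
    have s2 : q z (2*m+1) w / 4 ≤ q z (2*m+2) 0 := by
      apply q_step_ge z (2*m+1) w 0 h0z
      rcases hw with h|h <;> subst h
      · left; decide
      · right; right; left; decide
    have e : 2*(m+1) = 2*m + 2 := by ring
    rw [e]
    have : ((1:ℝ)/16)^(m+1) = ((1/16)^m) / 16 := by ring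
    rw [this]
    linarith

lemma reach {z : ℤ × ℤ} (hz : z ≠ 0) : ∀ (d : ℕ) (y : ℤ × ℤ) (m : ℕ),
    (z.1 - y.1).natAbs + (z.2 - y.2).natAbs = d →
    ((1:ℝ)/4)^d * q z m y ≤ fh z (m + d) := by
  intro d
  induction d using Nat.strong_induction_on with
  | _ d IH =>
    intro y m hd
    match d, hd with
    | 0, hd =>
      have hy : y = z := by
        have h1 : z.1 = y.1 := by omega
        have h2 : z.2 = y.2 := by omega
        exact Prod.ext h1.symm h2.symm
      rw [hy, q_self hz]
      simpa using fh_nonneg z m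
    | 1, hd =>
      have h4 : y = z + (1,0) ∨ y = z - (1,0) ∨ y = z + (0,1) ∨ y = z - (0,1) := by
        have : (z.1 - y.1 = 1 ∧ z.2 - y.2 = 0) ∨ (z.1 - y.1 = -1 ∧ z.2 - y.2 = 0)
            ∨ (z.1 - y.1 = 0 ∧ z.2 - y.2 = 1) ∨ (z.1 - y.1 = 0 ∧ z.2 - y.2 = -1) := by omega
        rcases this with ⟨h1,h2⟩|⟨h1,h2⟩|⟨h1,h2⟩|⟨h1,h2⟩
        · right; left; exact Prod.ext (by simp; omega) (by simp; omega)
        · left; exact Prod.ext (by simp; omega) (by simp; omega)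
        · right; right; right; exact Prod.ext (by simp; omega) (by simp; omega)
        · right; right; left; exact Prod.ext (by simp; omega) (by simp; omega)
      have := fh_step_ge z m y h4
      have hq := q_nonneg z m y
      calc ((1:ℝ)/4)^1 * q z m y = q z m y / 4 := by ring
        _ ≤ fh z (m+1) := this
    | (e+2), hd =>
      set d := e + 2 with hd2
      have key : ∃ y' : ℤ × ℤ,
          (z.1 - y'.1).natAbs + (z.2 - y'.2).natAbs = e + 1 ∧
          (y = y' + (1,0) ∨ y = y' - (1,0) ∨ y = y' + (0,1) ∨ y = y' - (0,1)) := by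
        by_cases h1 : y.1 < z.1
        · refine ⟨y + (1,0), ?_, ?_⟩
          · have e1 : (y + (1,0)).1 = y.1 + 1 := rfl
            have e2 : (y + (1,0)).2 = y.2 := by simp
            rw [e1, e2]; omega
          · right; left; exact Prod.ext (by simp) (by simp)
        by_cases h2 : z.1 < y.1
        · refine ⟨y - (1,0), ?_, ?_⟩
          · have e1 : (y - (1,0)).1 = y.1 - 1 := rfl
            have e2 : (y - (1,0)).2 = y.2 := by simp
            rw [e1, e2]; omega
          · left; exact Prod.ext (by simp) (by simp)
        by_cases h3 : y.2 < z.2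
        · refine ⟨y + (0,1), ?_, ?_⟩
          · have e1 : (y + (0,1)).1 = y.1 := by simp
            have e2 : (y + (0,1)).2 = y.2 + 1 := rfl
            rw [e1, e2]; omega
          · right; right; right; exact Prod.ext (by simp) (by simp)
        · refine ⟨y - (0,1), ?_, ?_⟩
          · have e1 : (y - (0,1)).1 = y.1 := by simp
            have e2 : (y - (0,1)).2 = y.2 - 1 := rfl
            rw [e1, e2]; omega
          · right; right; left; exact Prod.ext (by simp) (by simp)
      obtain ⟨y', hdist, hnb⟩ := key
      have hy' : y' ≠ z := by
        intro h; subst h; simp at hdist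
      have step := q_step_ge z m y y' hy' hnb
      have ih := IH (e+1) (by omega) y' (m+1) hdist
      have harith : (m+1) + (e+1) = m + d := by omega
      rw [harith] at ih
      have hq := q_nonneg z m y
      have hpow : (0:ℝ) < ((1:ℝ)/4)^(e+1) := by positivity
      calc ((1:ℝ)/4)^d * q z m y = ((1:ℝ)/4)^(e+1) * (q z m y / 4) := by
            rw [hd2]; ring
        _ ≤ ((1:ℝ)/4)^(e+1) * q z (m+1) y' := by
            apply mul_le_mul_of_nonneg_left step (le_of_lt hpow)
        _ ≤ fh z (m + d) := ih

lemma fh_lower {z : ℤ × ℤ} (hz : z ≠ 0) (m : ℕ) :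
    ((1:ℝ)/4)^(2*m + (z.1.natAbs + z.2.natAbs)) ≤ fh z (2*m + (z.1.natAbs + z.2.natAbs)) := by
  set D := z.1.natAbs + z.2.natAbs with hD
  have hr := reach hz D 0 (2*m) (by simp [hD])
  have hq := q_zero_ge hz m
  have h16 : ((1:ℝ)/16)^m = ((1:ℝ)/4)^(2*m) := by
    rw [pow_mul]; norm_num
  calc ((1:ℝ)/4)^(2*m + D) = ((1:ℝ)/4)^D * ((1:ℝ)/4)^(2*m) := by rw [pow_add]; ring
    _ ≤ ((1:ℝ)/4)^D * q z (2*m) 0 := by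
        apply mul_le_mul_of_nonneg_left _ (by positivity)
        rw [← h16]; exact hq
    _ ≤ fh z (2*m + D) := hr

end SRWAux


namespace SRWAux

variable {z : ℤ × ℤ} {lam : ℝ}

lemma firstHit_nonneg (hz : z ≠ 0) (k : ℕ) : 0 ≤ srwFirstHit z k := by
  rw [srwFirstHit_eq_fh hz]; exact fh_nonneg z k

lemma firstHit_le_one (hz : z ≠ 0) (k : ℕ) : srwFirstHit z k ≤ 1 := by
  rw [srwFirstHit_eq_fh hz]; exact fh_le_one z k

lemma exp_term (lam : ℝ) (k : ℕ) : Real.exp (-lam * k) = (Real.exp (-lam))^k := by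
  rw [← Real.exp_nat_mul]; ring_nf

lemma F_nonneg (hz : z ≠ 0) (k : ℕ) : 0 ≤ Real.exp (-lam * k) * srwFirstHit z k :=
  mul_nonneg (Real.exp_nonneg _) (firstHit_nonneg hz k)

lemma F_le (hz : z ≠ 0) (k : ℕ) :
    Real.exp (-lam * k) * srwFirstHit z k ≤ (Real.exp (-lam))^k := by
  rw [exp_term]
  exact mul_le_of_le_one_right (pow_nonneg (Real.exp_nonneg _) k) (firstHit_le_one hz k)

lemma summable_geom (hlam : 0 < lam) : Summable (fun k : ℕ => (Real.exp (-lam))^k) :=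
  summable_geometric_of_lt_one (Real.exp_nonneg _) (by rw [Real.exp_lt_one_iff]; linarith)

lemma summable_F (hz : z ≠ 0) (hlam : 0 < lam) :
    Summable (fun k : ℕ => Real.exp (-lam * k) * srwFirstHit z k) :=
  Summable.of_nonneg_of_le (F_nonneg hz) (F_le hz) (summable_geom hlam)

lemma summable_G (hz : z ≠ 0) (hlam : 0 < lam) (t : ℝ) :
    Summable (fun k : ℕ => if t < (k : ℝ) then Real.exp (-lam * k) * srwFirstHit z k else 0) := by
  apply Summable.of_nonneg_of_le (fun k => ?_) (fun k => ?_) (summable_F hz hlam)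
  · split <;> [exact F_nonneg hz k; exact le_refl 0]
  · split <;> [exact le_refl _; exact F_nonneg hz k]

lemma tail_le (hz : z ≠ 0) (hlam : 0 < lam) {t : ℝ} (ht : 0 ≤ t) :
    (∑' k : ℕ, if t < (k : ℝ) then Real.exp (-lam * k) * srwFirstHit z k else 0)
      ≤ Real.exp (-lam * t) / (1 - Real.exp (-lam)) := by
  set r := Real.exp (-lam) with hr
  have hr0 : 0 < r := Real.exp_pos _
  have hr1 : r < 1 := by rw [hr, Real.exp_lt_one_iff]; linarith
  set m : ℕ := ⌊t⌋.toNat + 1 with hm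
  have hfl0 : (0:ℤ) ≤ ⌊t⌋ := Int.floor_nonneg.mpr ht
  have hcast : ((⌊t⌋.toNat : ℕ) : ℝ) = ((⌊t⌋ : ℤ) : ℝ) := by
    exact_mod_cast congrArg (Int.cast : ℤ → ℝ) (Int.toNat_of_nonneg hfl0)
  have htm : t < (m : ℝ) := by
    have h2 : ((⌊t⌋ : ℝ) + 1) = (m : ℝ) := by
      rw [hm]; push_cast; rw [hcast]
    linarith [Int.lt_floor_add_one t]
  set G := fun k : ℕ => if t < (k : ℝ) then Real.exp (-lam * k) * srwFirstHit z k else 0 with hG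
  have hsumG := summable_G hz hlam t (z := z)
  have hzero : ∀ k ∈ Finset.range m, G k = 0 := by
    intro k hk
    have hk' : k < m := Finset.mem_range.mp hk
    have : ¬ t < (k : ℝ) := by
      push_neg
      have : (k : ℝ) ≤ ((m : ℝ) - 1) := by
        have : k ≤ m - 1 := by omega
        have h2 : (k:ℝ) ≤ ((m - 1 : ℕ) : ℝ) := by exact_mod_cast this
        have h3 : ((m - 1 : ℕ) : ℝ) = (m:ℝ) - 1 := by
          have : 1 ≤ m := by omega
          push_cast [this]; ring
        linarith
      have hfl : ((m : ℝ) - 1) ≤ t := by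
        have : ((⌊t⌋ : ℝ)) ≤ t := Int.floor_le t
        have h4 : ((m : ℝ) - 1) = ((⌊t⌋.toNat : ℕ) : ℝ) := by rw [hm]; push_cast; ring
        rw [h4, hcast]; exact this
      linarith
    simp [hG, this]
  have h1 : (∑' k, G k) = ∑' j : ℕ, G (j + m) := by
    rw [← Summable.sum_add_tsum_nat_add m hsumG, Finset.sum_eq_zero hzero, zero_add]
  rw [show (∑' k, G k) ≤ Real.exp (-lam * t) / (1 - Real.exp (-lam)) ↔ _ from Iff.rfl]
  rw [h1]
  have hbound : ∀ j : ℕ, G (j + m) ≤ r^m * r^j := by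
    intro j
    have : G (j + m) ≤ r^(j+m) := by
      simp only [hG]
      split
      · exact F_le hz (j + m)
      · positivity
    calc G (j+m) ≤ r^(j+m) := this
      _ = r^m * r^j := by rw [pow_add]; ring
  have hsum2 : Summable (fun j : ℕ => r^m * r^j) := (summable_geom hlam).mul_left _
  have h2 : (∑' j : ℕ, G (j + m)) ≤ ∑' j : ℕ, r^m * r^j := by
    apply Summable.tsum_le_tsum hbound (hsumG.comp_injective (add_left_injective m)) hsum2
  have h3 : (∑' j : ℕ, r^m * r^j) = r^m / (1 - r) := by
    rw [tsum_mul_left, tsum_geometric_of_lt_one (le_of_lt hr0) hr1]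
    field_simp
  have h4 : r^m ≤ Real.exp (-lam * t) := by
    rw [hr, ← Real.exp_nat_mul]
    apply Real.exp_le_exp.mpr
    have : t ≤ (m:ℝ) := le_of_lt htm
    nlinarith
  have h5 : 0 < 1 - r := by linarith
  calc (∑' j : ℕ, G (j + m)) ≤ r^m / (1-r) := h2.trans (le_of_eq h3)
    _ ≤ Real.exp (-lam * t) / (1 - r) := by gcongr

end SRWAux

namespace SRWAux

lemma tail_ge (hz : z ≠ 0) (hlam : 0 < lam) {t : ℝ} (ht : 0 ≤ t) :
    (Real.exp (-lam) * (1/4))^(2*(⌊t⌋.toNat + 1) + (z.1.natAbs + z.2.natAbs))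
      ≤ ∑' k : ℕ, if t < (k : ℝ) then Real.exp (-lam * k) * srwFirstHit z k else 0 := by
  set r := Real.exp (-lam) with hr
  set D := z.1.natAbs + z.2.natAbs with hD
  set k0 := 2*(⌊t⌋.toNat + 1) + D with hk0
  have hfl0 : (0:ℤ) ≤ ⌊t⌋ := Int.floor_nonneg.mpr ht
  have hcast : ((⌊t⌋.toNat : ℕ) : ℝ) = ((⌊t⌋ : ℤ) : ℝ) := by
    exact_mod_cast congrArg (Int.cast : ℤ → ℝ) (Int.toNat_of_nonneg hfl0)
  have hcond : t < (k0 : ℝ) := by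
    have h1 : t < (⌊t⌋ : ℝ) + 1 := Int.lt_floor_add_one t
    have h2 : ((⌊t⌋ : ℝ) + 1) ≤ (k0 : ℝ) := by
      rw [hk0]; push_cast; rw [hcast]; push_cast; linarith [Nat.cast_nonneg (α := ℝ) D]
    linarith
  have hterm : (r * (1/4))^k0 ≤ (if t < (k0 : ℝ) then Real.exp (-lam * k0) * srwFirstHit z k0 else 0) := by
    rw [if_pos hcond, exp_term, srwFirstHit_eq_fh hz, mul_pow]
    have hfh := fh_lower hz (⌊t⌋.toNat + 1)
    rw [← hD, ← hk0] at hfh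
    exact mul_le_mul_of_nonneg_left hfh (pow_nonneg (Real.exp_nonneg _) _)
  exact hterm.trans (Summable.le_tsum (summable_G hz hlam t) k0 (fun j _ => by
    split <;> [exact F_nonneg hz j; exact le_refl 0]))

lemma tail_le_total (hz : z ≠ 0) (hlam : 0 < lam) (t : ℝ) :
    (∑' k : ℕ, if t < (k : ℝ) then Real.exp (-lam * k) * srwFirstHit z k else 0)
      ≤ ∑' k : ℕ, Real.exp (-lam * k) * srwFirstHit z k := by
  apply Summable.tsum_le_tsum _ (summable_G hz hlam t) (summable_F hz hlam)
  intro k; split <;> [exact le_refl _; exact F_nonneg hz k]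

end SRWAux


/-- Truncation lemma for the Laplace transform of hitting times: if
`A = inf_{γ>0}(λγ + γ I(x/γ))` is attained at `γ₀ ∈ (0,∞)` (with `I(x/γ₀) < ∞`)
then for `ν > (γ₀/λ)(λ + I(x/γ₀))`,
`limsup (1/n) log E[e^{-λH(nx)}; H(nx) > νn] < -A`; consequently, provided
`liminf (1/n) log E[e^{-λH(nx)}] ≥ -A`, the ratio
`E[e^{-λH(nx)}; H(nx) > νn] / E[e^{-λH(nx)}]` tends to `0`. -/
theorem hitting_time_truncation (x : ℤ × ℤ) (hx : x ≠ 0) (lam : ℝ) (hlam : 0 < lam)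
    (γ0 : ℝ) (hγ0 : 0 < γ0)
    (hfin : cramerI (γ0⁻¹ • (((x.1 : ℝ), (x.2 : ℝ)) : ℝ × ℝ)) ≠ ⊤)
    (A : ℝ≥0∞)
    (hA : A = ⨅ γ ∈ Set.Ioi (0 : ℝ),
      (ENNReal.ofReal (lam * γ) +
        ENNReal.ofReal γ * cramerI (γ⁻¹ • (((x.1 : ℝ), (x.2 : ℝ)) : ℝ × ℝ))))
    (hattain : A = ENNReal.ofReal (lam * γ0) +
        ENNReal.ofReal γ0 * cramerI (γ0⁻¹ • (((x.1 : ℝ), (x.2 : ℝ)) : ℝ × ℝ)))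
    (ν : ℝ)
    (hν : (γ0 / lam) *
        (lam + (cramerI (γ0⁻¹ • (((x.1 : ℝ), (x.2 : ℝ)) : ℝ × ℝ))).toReal) < ν) :
    limsup (fun n : ℕ => Real.log (hitLaplaceTail lam ν n (n • x)) / n) atTop
        < -A.toReal ∧
    (-A.toReal ≤ liminf (fun n : ℕ => Real.log (hitLaplace lam (n • x)) / n) atTop →
      Tendsto (fun n : ℕ => hitLaplaceTail lam ν n (n • x) / hitLaplace lam (n • x))
        atTop (nhds 0)) := by
  classical
  set I := cramerI (γ0⁻¹ • (((x.1 : ℝ), (x.2 : ℝ)) : ℝ × ℝ)) with hIdef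
  -- A is finite, compute its real value
  have hAne : A ≠ ⊤ := by
    rw [hattain]
    exact ENNReal.add_ne_top.mpr ⟨ENNReal.ofReal_ne_top,
      ENNReal.mul_ne_top ENNReal.ofReal_ne_top hfin⟩
  have hAtoReal : A.toReal = lam * γ0 + γ0 * I.toReal := by
    rw [hattain, ENNReal.toReal_add ENNReal.ofReal_ne_top
      (ENNReal.mul_ne_top ENNReal.ofReal_ne_top hfin), ENNReal.toReal_mul,
      ENNReal.toReal_ofReal (by positivity : (0:ℝ) ≤ lam * γ0),
      ENNReal.toReal_ofReal (le_of_lt hγ0)]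
  have hI0 : 0 ≤ I.toReal := ENNReal.toReal_nonneg
  have hνA : A.toReal < lam * ν := by
    have h1 : lam * ((γ0/lam) * (lam + I.toReal)) < lam * ν :=
      mul_lt_mul_of_pos_left hν hlam
    have h2 : lam * ((γ0/lam) * (lam + I.toReal)) = lam * γ0 + γ0 * I.toReal := by
      field_simp
    rw [hAtoReal]; linarith
  have hν0 : 0 < ν := by
    have h3 : 0 < γ0 / lam := div_pos hγ0 hlam
    nlinarith
  -- basic constants
  set r := Real.exp (-lam) with hrdef
  have hr0 : 0 < r := Real.exp_pos _
  have hr1 : r < 1 := by rw [hrdef, Real.exp_lt_one_iff]; linarith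
  set b := r * (1/4) with hbdef
  have hb0 : 0 < b := by positivity
  have hb1 : b < 1 := by rw [hbdef]; nlinarith
  have hlogb : Real.log b < 0 := Real.log_neg hb0 hb1
  set Dx : ℕ := x.1.natAbs + x.2.natAbs with hDx
  -- per-n facts
  have hzn : ∀ n : ℕ, n ≠ 0 → n • x ≠ 0 := by
    intro n hn h
    apply hx
    have h1 : (n • x).1 = (n : ℤ) * x.1 := by
      simp [Prod.smul_fst, nsmul_eq_mul]
    have h2 : (n • x).2 = (n : ℤ) * x.2 := by
      simp [Prod.smul_snd, nsmul_eq_mul]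
    have hn' : (n : ℤ) ≠ 0 := by exact_mod_cast hn
    have e1 : x.1 = 0 := by
      have := congrArg Prod.fst h
      rw [h1] at this
      simpa [hn', hn] using this
    have e2 : x.2 = 0 := by
      have := congrArg Prod.snd h
      rw [h2] at this
      simpa [hn', hn] using this
    exact Prod.ext e1 e2
  have hDn : ∀ n : ℕ, ((n • x).1.natAbs + (n • x).2.natAbs) = n * Dx := by
    intro n
    have h1 : (n • x).1 = (n : ℤ) * x.1 := by simp [Prod.smul_fst, nsmul_eq_mul]
    have h2 : (n • x).2 = (n : ℤ) * x.2 := by simp [Prod.smul_snd, nsmul_eq_mul]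
    rw [h1, h2, Int.natAbs_mul, Int.natAbs_mul, hDx]
    simp [Int.natAbs_natCast]
    ring
  set u := fun n : ℕ => Real.log (hitLaplaceTail lam ν n (n • x)) / n with hudef
  set v := fun n : ℕ => Real.log (hitLaplace lam (n • x)) / n with hvdef
  set L0 : ℝ := (2*ν + 2 + Dx) * Real.log b with hL0
  set cU : ℝ := -Real.log (1 - r) with hcU
  -- main per-n estimates
  have key : ∀ n : ℕ, 1 ≤ n →
      0 < hitLaplaceTail lam ν n (n • x) ∧
      hitLaplaceTail lam ν n (n • x) ≤ hitLaplace lam (n • x) ∧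
      u n ≤ -(lam*ν) + cU * (1/n) ∧ L0 ≤ u n ∧ u n ≤ v n := by
    intro n hn
    have hzn' : n • x ≠ 0 := hzn n (by omega)
    have hn0 : (0:ℝ) < (n:ℝ) := by exact_mod_cast hn
    have ht : (0:ℝ) ≤ ν * n := by positivity
    set t : ℝ := ν * (n:ℝ) with htdef
    have htail : hitLaplaceTail lam ν n (n • x)
        = ∑' k : ℕ, if t < (k : ℝ) then Real.exp (-lam * k) * srwFirstHit (n • x) k else 0 := rfl
    have htot : hitLaplace lam (n • x)
        = ∑' k : ℕ, Real.exp (-lam * k) * srwFirstHit (n • x) k := rfl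
    set k0 : ℕ := 2*(⌊t⌋.toNat + 1) + ((n • x).1.natAbs + (n • x).2.natAbs) with hk0
    have hge : b^k0 ≤ hitLaplaceTail lam ν n (n • x) := by
      rw [htail, hbdef]
      exact SRWAux.tail_ge hzn' hlam ht
    have hpos : 0 < hitLaplaceTail lam ν n (n • x) :=
      lt_of_lt_of_le (pow_pos hb0 k0) hge
    have hle : hitLaplaceTail lam ν n (n • x) ≤ Real.exp (-lam * t) / (1 - r) := by
      rw [htail]
      exact SRWAux.tail_le hzn' hlam ht
    have hleT : hitLaplaceTail lam ν n (n • x) ≤ hitLaplace lam (n • x) := by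
      rw [htail, htot]
      exact SRWAux.tail_le_total hzn' hlam t
    refine ⟨hpos, hleT, ?_, ?_, ?_⟩
    · -- upper bound on u n
      have hlog : Real.log (hitLaplaceTail lam ν n (n • x)) ≤ -lam * t - Real.log (1 - r) := by
        have := Real.log_le_log hpos hle
        rwa [Real.log_div (Real.exp_ne_zero _) (by linarith), Real.log_exp] at this
      have h4 : Real.log (hitLaplaceTail lam ν n (n • x)) / n
          ≤ (-lam * t - Real.log (1-r)) / n :=
        div_le_div_of_nonneg_right hlog (le_of_lt hn0)
      have h5 : (-lam * t - Real.log (1-r)) / n = -(lam*ν) + cU * (1/n) := by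
        rw [htdef, hcU]; field_simp; ring
      simp only [hudef]
      rw [← h5]
      exact h4
    · -- lower bound L0 ≤ u n
      have hn1 : (1:ℝ) ≤ (n:ℝ) := by exact_mod_cast hn
      have hlogtail : (k0:ℝ) * Real.log b ≤ Real.log (hitLaplaceTail lam ν n (n • x)) := by
        have := Real.log_le_log (pow_pos hb0 k0) hge
        rwa [Real.log_pow] at this
      have hk0eq : k0 = 2*(⌊t⌋.toNat + 1) + n*Dx := by rw [hk0, hDn]
      have hfl : ((⌊t⌋.toNat : ℕ) : ℝ) ≤ t := by
        have h1 : ((⌊t⌋ : ℤ):ℝ) ≤ t := Int.floor_le t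
        have h0 : (0:ℤ) ≤ ⌊t⌋ := Int.floor_nonneg.mpr ht
        have h2 : ((⌊t⌋.toNat : ℕ) : ℝ) = ((⌊t⌋ : ℤ) : ℝ) := by
          exact_mod_cast congrArg (Int.cast : ℤ → ℝ) (Int.toNat_of_nonneg h0)
        linarith [h2 ▸ h1]
      have hk0le : (k0:ℝ) ≤ (n:ℝ) * (2*ν + 2 + (Dx:ℝ)) := by
        have htt : t = ν * n := htdef
        push_cast [hk0eq]
        nlinarith [hfl]
      have hmul : (n:ℝ) * (2*ν+2+(Dx:ℝ)) * Real.log b ≤ (k0:ℝ) * Real.log b :=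
        mul_le_mul_of_nonpos_right hk0le (le_of_lt hlogb)
      simp only [hudef]
      rw [hL0, le_div_iff₀ hn0]
      calc (2*ν+2+(Dx:ℝ)) * Real.log b * n = (n:ℝ) * (2*ν+2+(Dx:ℝ)) * Real.log b := by ring
        _ ≤ (k0:ℝ) * Real.log b := hmul
        _ ≤ Real.log (hitLaplaceTail lam ν n (n • x)) := hlogtail
    · -- u n ≤ v n
      simp only [hudef, hvdef]
      exact div_le_div_of_nonneg_right (Real.log_le_log hpos hleT) (le_of_lt hn0)
  -- Part 1 : limsup bound
  have hgto : Tendsto (fun n : ℕ => -(lam*ν) + cU * (1/n)) atTop (nhds (-(lam*ν))) := by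
    have h0 : Tendsto (fun n : ℕ => cU * (1/(n:ℝ))) atTop (nhds 0) := by
      simpa using tendsto_one_div_atTop_nhds_zero_nat.const_mul cU
    simpa using tendsto_const_nhds.add h0
  have hub : ∀ᶠ n in atTop, u n ≤ -(lam*ν) + cU * (1/(n:ℝ)) :=
    eventually_atTop.mpr ⟨1, fun n hn => (key n hn).2.2.1⟩
  have hlb : ∀ᶠ n in atTop, L0 ≤ u n :=
    eventually_atTop.mpr ⟨1, fun n hn => (key n hn).2.2.2.1⟩
  have hcobound : IsCoboundedUnder (· ≤ ·) atTop u :=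
    Filter.isCoboundedUnder_le_of_eventually_le atTop hlb
  have hbdd : IsBoundedUnder (· ≤ ·) atTop (fun n : ℕ => -(lam*ν) + cU * (1/(n:ℝ))) :=
    hgto.isBoundedUnder_le
  have hlimsup : limsup u atTop ≤ -(lam*ν) := by
    calc limsup u atTop ≤ limsup (fun n : ℕ => -(lam*ν) + cU * (1/(n:ℝ))) atTop :=
          limsup_le_limsup hub hcobound hbdd
      _ = -(lam*ν) := hgto.limsup_eq
  have part1 : limsup u atTop < -A.toReal := lt_of_le_of_lt hlimsup (by linarith)
  refine ⟨part1, ?_⟩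
  intro hliminf
  set s : ℝ := -(lam*ν) with hs
  set tA : ℝ := -A.toReal with htA
  have hstA : s < tA := by rw [hs, htA]; linarith
  set c1 : ℝ := s + (tA - s)/3 with hc1
  set c2 : ℝ := s + 2*(tA - s)/3 with hc2
  have hsc1 : s < c1 := by rw [hc1]; linarith
  have hc12 : c1 < c2 := by rw [hc1, hc2]; linarith
  have hc2tA : c2 < tA := by rw [hc2]; linarith
  have ev_u : ∀ᶠ n in atTop, u n < c1 := by
    filter_upwards [hub, hgto.eventually_lt_const hsc1] with n h1 h2
    exact lt_of_le_of_lt h1 h2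
  have hvbdd : IsBoundedUnder (· ≥ ·) atTop v := by
    apply Filter.isBoundedUnder_of_eventually_ge (a := L0)
    filter_upwards [eventually_atTop.mpr ⟨1, fun (n : ℕ) (hn : 1 ≤ n) => key n hn⟩]
      with n hk
    exact hk.2.2.2.1.trans hk.2.2.2.2
  have ev_v : ∀ᶠ n in atTop, c2 < v n := by
    apply eventually_lt_of_lt_liminf _ hvbdd
    exact lt_of_lt_of_le hc2tA hliminf
  have hq0 : (0:ℝ) ≤ Real.exp (c1 - c2) := (Real.exp_pos _).le
  have hq1 : Real.exp (c1 - c2) < 1 := by rw [Real.exp_lt_one_iff]; linarith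
  have hgeo : Tendsto (fun n : ℕ => (Real.exp (c1 - c2))^n) atTop (nhds 0) :=
    tendsto_pow_atTop_nhds_zero_of_lt_one hq0 hq1
  apply squeeze_zero' ?_ ?_ hgeo
  · filter_upwards [eventually_atTop.mpr ⟨1, fun (n : ℕ) (hn : 1 ≤ n) => key n hn⟩]
      with n hk
    exact div_nonneg hk.1.le (hk.1.le.trans hk.2.1)
  · filter_upwards [eventually_atTop.mpr ⟨1, fun (n : ℕ) (hn : 1 ≤ n) => key n hn⟩,
      ev_u, ev_v, eventually_ge_atTop 1] with n hk h1 h2 hn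
    have hn0 : (0:ℝ) < (n:ℝ) := by exact_mod_cast hn
    have hpos := hk.1
    have hleT := hk.2.1
    have htot_pos : 0 < hitLaplace lam (n • x) := lt_of_lt_of_le hpos hleT
    have htail_lt : hitLaplaceTail lam ν n (n • x) < Real.exp (c1 * n) := by
      have hl : Real.log (hitLaplaceTail lam ν n (n • x)) < c1 * n := by
        have := (div_lt_iff₀ hn0).mp h1
        linarith [this]
      calc hitLaplaceTail lam ν n (n • x)
          = Real.exp (Real.log (hitLaplaceTail lam ν n (n • x))) := (Real.exp_log hpos).symm
        _ < Real.exp (c1 * n) := Real.exp_lt_exp.mpr hl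
    have htot_gt : Real.exp (c2 * n) < hitLaplace lam (n • x) := by
      have hl : c2 * n < Real.log (hitLaplace lam (n • x)) := by
        have := (lt_div_iff₀ hn0).mp h2
        linarith [this]
      calc Real.exp (c2 * n) < Real.exp (Real.log (hitLaplace lam (n • x))) :=
            Real.exp_lt_exp.mpr hl
        _ = hitLaplace lam (n • x) := Real.exp_log htot_pos
    calc hitLaplaceTail lam ν n (n • x) / hitLaplace lam (n • x)
        ≤ Real.exp (c1 * n) / Real.exp (c2 * n) :=
          div_le_div₀ (Real.exp_pos _).le htail_lt.le (Real.exp_pos _) htot_gt.le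
      _ = (Real.exp (c1 - c2))^n := by
          rw [← Real.exp_sub, show c1 * n - c2 * n = (n:ℝ) * (c1 - c2) by ring,
            Real.exp_nat_mul]
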